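/- Let R be a commutative ring, let a and N be positive integers, let A₀, …, A_{a−1} be N×N matrices over R, and let M be the associated block-cyclic matrix. Then in R[X] one has det(X·I_{aN} − M) = det(X^a·I_N − A_{a−1}A_{a−2}⋯A₀); in other words the characteristic polynomial of M is obtained from the characteristic polynomial of the product A_{a−1}A_{a−2}⋯A₀ by substituting X^a for X. -/

import Mathlib

open Polynomial

/-- The block-cyclic matrix associated to `N × N` matrices `A₀, …, A_{a-1}`:
the `(aN) × (aN)` matrix, with rows and columns indexed by pairs
`(j, x) ∈ (ℤ/aℤ) × {1, …, N}`, whose `(j+1, j)` block is `A j` and all of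
whose other blocks vanish; it carries the `j`-th block of coordinates to the
`(j+1)`-st block via `A j`. -/
def blockCyclic {R : Type*} [CommRing R] {a N : ℕ} [NeZero a]
    (A : ZMod a → Matrix (Fin N) (Fin N) R) :
    Matrix (ZMod a × Fin N) (ZMod a × Fin N) R :=
  Matrix.of fun p q => if p.1 = q.1 + 1 then A q.1 p.2 q.2 else 0

namespace BlockCyclicAux

open Matrix

set_option linter.unusedSectionVars false

variable {R : Type*} [CommRing R] {a N : ℕ} [NeZero a]
  (A : ZMod a → Matrix (Fin N) (Fin N) R)

lemma val_sub_one {j : ZMod a} (hj : j.val ≠ 0) : (j - 1).val = j.val - 1 := by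
  have hlt := ZMod.val_lt j
  have h1 : ((j.val - 1 : ℕ) : ZMod a) = j - 1 := by
    rw [Nat.cast_sub (by omega : 1 ≤ j.val), Nat.cast_one,
      (ZMod.natCast_rightInverse j : ((j.val : ℕ) : ZMod a) = j)]
  rw [← h1, ZMod.val_cast_of_lt (by omega)]

lemma val_zero_sub_one : ((0 : ZMod a) - 1).val = a - 1 := by
  have ha : 1 ≤ a := Nat.one_le_iff_ne_zero.mpr (NeZero.ne a)
  have h1 : (0 : ZMod a) - 1 = ((a - 1 : ℕ) : ZMod a) := by
    rw [Nat.cast_sub ha]; simp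
  rw [h1, ZMod.val_cast_of_lt (by omega)]

/-- The partial product `A_{k+n-1} ⋯ A_{k+1} A_k`. -/
def prodSeg (k n : ℕ) : Matrix (Fin N) (Fin N) R :=
  ((List.range n).reverse.map fun i => A ((k + i : ℕ) : ZMod a)).prod

@[simp] lemma prodSeg_zero (k : ℕ) : prodSeg A k 0 = 1 := rfl

lemma prodSeg_succ (k n : ℕ) :
    prodSeg A k (n + 1) = A ((k + n : ℕ) : ZMod a) * prodSeg A k n := by
  simp [prodSeg, List.range_succ]

/-- The auxiliary "triangularizing" matrix. -/
noncomputable def Cmat : Matrix (ZMod a × Fin N) (ZMod a × Fin N) R[X] :=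
  Matrix.of fun p q =>
    if q.1.val ≤ p.1.val then
      X ^ (a - 1 - (p.1.val - q.1.val)) *
        C (prodSeg A q.1.val (p.1.val - q.1.val) p.2 q.2)
    else 0

lemma Cmat_apply_le {p q : ZMod a × Fin N} (h : q.1.val ≤ p.1.val) :
    Cmat A p q = X ^ (a - 1 - (p.1.val - q.1.val)) *
        C (prodSeg A q.1.val (p.1.val - q.1.val) p.2 q.2) := by
  simp [Cmat, h]

lemma Cmat_apply_gt {p q : ZMod a × Fin N} (h : p.1.val < q.1.val) :
    Cmat A p q = 0 := by
  simp [Cmat, Nat.not_le.mpr h]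

lemma mul_entry (p q : ZMod a × Fin N) :
    (charmatrix (blockCyclic A) * Cmat A) p q
      = X * Cmat A p q - ∑ y, C (A (p.1 - 1) p.2 y) * Cmat A (p.1 - 1, y) q := by
  rw [Matrix.mul_apply]
  have : ∀ r : ZMod a × Fin N, charmatrix (blockCyclic A) p r * Cmat A r q
      = (if p = r then X * Cmat A r q else 0)
        - (if r.1 = p.1 - 1 then C (A (p.1 - 1) p.2 r.2) * Cmat A r q else 0) := by
    intro r
    rw [charmatrix_apply, sub_mul]
    congr 1
    · rw [diagonal_apply]
      split <;> simp
    · rw [show blockCyclic A p r = if p.1 = r.1 + 1 then A r.1 p.2 r.2 else 0 from rfl]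
      by_cases h : r.1 = p.1 - 1
      · have hp : p.1 = r.1 + 1 := by rw [h]; ring
        rw [if_pos hp, if_pos h, h]
      · have hp : ¬ p.1 = r.1 + 1 := fun hc => h (by rw [hc]; ring)
        rw [if_neg hp, if_neg h, map_zero, zero_mul]
  simp_rw [this, Finset.sum_sub_distrib, Finset.sum_ite_eq, Finset.mem_univ, if_true]
  congr 1
  rw [Fintype.sum_prod_type, Finset.sum_comm]
  simp [Finset.sum_ite_eq']

lemma blockTriangular_mul :
    BlockTriangular (charmatrix (blockCyclic A) * Cmat A) (fun p => p.1.val) := by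
  intro p q hlt
  simp only at hlt
  rw [mul_entry, Cmat_apply_le A hlt.le]
  have hia := ZMod.val_lt p.1
  have hi : p.1.val ≠ 0 := by omega
  have hv : (p.1 - 1).val = p.1.val - 1 := val_sub_one hi
  have hcast : ((p.1.val - 1 : ℕ) : ZMod a) = p.1 - 1 := by
    rw [← hv]; exact ZMod.natCast_rightInverse _
  have hA : A (p.1 - 1) = A ((q.1.val + (p.1.val - 1 - q.1.val) : ℕ) : ZMod a) := by
    rw [show q.1.val + (p.1.val - 1 - q.1.val) = p.1.val - 1 by omega, hcast]
  have hsum : ∀ y : Fin N, Cmat A (p.1 - 1, y) q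
      = X ^ (a - 1 - (p.1.val - 1 - q.1.val)) *
          C (prodSeg A q.1.val (p.1.val - 1 - q.1.val) y q.2) := by
    intro y
    rw [Cmat_apply_le A (by simp only [hv]; omega)]
    simp only [hv]
  simp_rw [hsum]
  have key : ∑ y, C (A (p.1 - 1) p.2 y) *
      (X ^ (a - 1 - (p.1.val - 1 - q.1.val)) *
        C (prodSeg A q.1.val (p.1.val - 1 - q.1.val) y q.2))
      = X ^ (a - 1 - (p.1.val - 1 - q.1.val)) *
        C (prodSeg A q.1.val (p.1.val - q.1.val) p.2 q.2) := by
    rw [show p.1.val - q.1.val = (p.1.val - 1 - q.1.val) + 1 by omega, prodSeg_succ, ← hA,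
      Matrix.mul_apply, map_sum, Finset.mul_sum]
    refine Finset.sum_congr rfl fun y _ => ?_
    rw [C_mul]; ring
  rw [key, ← mul_assoc, ← pow_succ',
    show a - 1 - (p.1.val - q.1.val) + 1 = a - 1 - (p.1.val - 1 - q.1.val) by omega, sub_self]

lemma mul_diag_ne_zero {p q : ZMod a × Fin N} (hpq : p.1 = q.1) (h0 : p.1.val ≠ 0) :
    (charmatrix (blockCyclic A) * Cmat A) p q = if p.2 = q.2 then X ^ a else 0 := by
  have ha : 1 ≤ a := Nat.one_le_iff_ne_zero.mpr (NeZero.ne a)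
  have hia := ZMod.val_lt p.1
  have hv : (p.1 - 1).val = p.1.val - 1 := val_sub_one h0
  rw [mul_entry]
  have hz : ∀ y : Fin N, Cmat A (p.1 - 1, y) q = 0 := fun y =>
    Cmat_apply_gt A (by simp only [hv, ← hpq]; omega)
  simp_rw [hz, mul_zero, Finset.sum_const_zero, sub_zero]
  rw [Cmat_apply_le A (by rw [hpq])]
  rw [hpq, Nat.sub_self, Nat.sub_zero, prodSeg_zero]
  rw [Matrix.one_apply]
  split
  · rw [C_1, mul_one, ← pow_succ', Nat.sub_add_cancel ha]
  · rw [C_0, mul_zero, mul_zero]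

lemma mul_diag_zero {p q : ZMod a × Fin N} (hpq : p.1 = q.1) (h0 : p.1.val = 0) :
    (charmatrix (blockCyclic A) * Cmat A) p q
      = (if p.2 = q.2 then X ^ a else 0) - C (prodSeg A 0 a p.2 q.2) := by
  have ha : 1 ≤ a := Nat.one_le_iff_ne_zero.mpr (NeZero.ne a)
  have hp1 : p.1 = 0 := (ZMod.val_eq_zero _).mp h0
  have hq0 : q.1.val = 0 := by rw [← hpq]; exact h0
  have hv : (p.1 - 1).val = a - 1 := by rw [hp1]; exact val_zero_sub_one
  rw [mul_entry]
  have hfirst : X * Cmat A p q = if p.2 = q.2 then X ^ a else 0 := by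
    rw [Cmat_apply_le A (by rw [hpq]), hpq, Nat.sub_self, Nat.sub_zero, prodSeg_zero,
      Matrix.one_apply]
    split
    · rw [C_1, mul_one, ← pow_succ', Nat.sub_add_cancel ha]
    · rw [C_0, mul_zero, mul_zero]
  rw [hfirst]
  congr 1
  have hcast : ((a - 1 : ℕ) : ZMod a) = p.1 - 1 := by
    rw [← hv]; exact ZMod.natCast_rightInverse _
  have hA : A (p.1 - 1) = A ((0 + (a - 1) : ℕ) : ZMod a) := by rw [Nat.zero_add, hcast]
  have hsum : ∀ y : Fin N, Cmat A (p.1 - 1, y) q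
      = C (prodSeg A 0 (a - 1) y q.2) := by
    intro y
    rw [Cmat_apply_le A (by simp only [hv]; omega)]
    simp only [hv, hq0, Nat.sub_zero, Nat.sub_self, pow_zero, one_mul]
  simp_rw [hsum]
  have hstep : prodSeg A 0 a = A (p.1 - 1) * prodSeg A 0 (a - 1) := by
    have h := prodSeg_succ A 0 (a - 1)
    rw [Nat.sub_add_cancel ha] at h
    rw [h, ← hA]
  rw [hstep, Matrix.mul_apply, map_sum]
  refine Finset.sum_congr rfl fun y _ => ?_
  rw [C_mul]


lemma blockTriangular_Cmat_transpose :
    BlockTriangular (Cmat A).transpose (fun p => p.1.val) := by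
  intro p q h
  exact Cmat_apply_gt A h

lemma image_val (hN : 0 < N) :
    (Finset.univ.image fun p : ZMod a × Fin N => p.1.val) = Finset.range a := by
  ext k
  simp only [Finset.mem_image, Finset.mem_univ, true_and, Finset.mem_range]
  constructor
  · rintro ⟨p, rfl⟩; exact ZMod.val_lt p.1
  · intro hk; exact ⟨((k : ZMod a), ⟨0, hN⟩), ZMod.val_cast_of_lt hk⟩

/-- The `k`-th block of indices is a copy of `Fin N`. -/
def blockEquiv (k : ℕ) (hk : k < a) :
    Fin N ≃ {p : ZMod a × Fin N // p.1.val = k} where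
  toFun x := ⟨((k : ZMod a), x), ZMod.val_cast_of_lt hk⟩
  invFun p := p.1.2
  left_inv x := rfl
  right_inv p := by
    obtain ⟨⟨j, x⟩, hj⟩ := p
    apply Subtype.ext
    have : (k : ZMod a) = j := by
      simp only at hj
      rw [← hj]
      exact ZMod.natCast_rightInverse j
    simp only [this]

lemma det_toSquareBlock (M : Matrix (ZMod a × Fin N) (ZMod a × Fin N) R[X])
    {k : ℕ} (hk : k < a) :
    (M.toSquareBlock (fun p => p.1.val) k).det
      = (Matrix.of fun x y : Fin N => M ((k : ZMod a), x) ((k : ZMod a), y)).det := by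
  rw [← Matrix.det_submatrix_equiv_self (blockEquiv k hk)]
  congr 1

lemma det_ite (c : R[X]) :
    (Matrix.of fun x y : Fin N => if x = y then c else 0).det = c ^ N := by
  have : (Matrix.of fun x y : Fin N => if x = y then c else 0)
      = Matrix.diagonal (fun _ => c) := by
    ext x y
    simp [Matrix.diagonal_apply]
  rw [this, Matrix.det_diagonal, Finset.prod_const, Finset.card_univ, Fintype.card_fin]

lemma cancel_X_pow {p q : R[X]} (E : ℕ) (h : p * X ^ E = q * X ^ E) : p = q := by
  ext n
  have := congrArg (fun r => Polynomial.coeff r (n + E)) h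
  simpa [Polynomial.coeff_mul_X_pow] using this

end BlockCyclicAux

open BlockCyclicAux in
/-- **Sections 7.1.12 and 8.5 of "Geometric non-vanishing" (Ulmer).**
Let `R` be a commutative ring, `a` and `N` positive integers, and
`A₀, …, A_{a-1}` be `N × N` matrices over `R` with associated block-cyclic
matrix `M`.  Then `det (X • 1 - M) = det (X^a • 1 - A_{a-1} ⋯ A₀)`: the
characteristic polynomial of `M` is obtained from the characteristic
polynomial of the product `A_{a-1} A_{a-2} ⋯ A₀` by substituting `X^a`
for `X`. -/
theorem charpoly_blockCyclic {R : Type*} [CommRing R] {a N : ℕ} [NeZero a]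
    (hNpos : 0 < N) (A : ZMod a → Matrix (Fin N) (Fin N) R) :
    (blockCyclic A).charpoly =
      (((List.range a).reverse.map fun j => A (j : ZMod a)).prod).charpoly.comp (X ^ a) := by
  classical
  have ha : 1 ≤ a := Nat.one_le_iff_ne_zero.mpr (NeZero.ne a)
  have hlist : ∀ l : List ℕ, ((l.map fun j => A (j : ZMod a))).prod
      = (l.map fun i => A ((0 + i : ℕ) : ZMod a)).prod := by
    intro l
    induction l with
    | nil => rfl
    | cons h t ih => simp only [Nat.zero_add] at ih ⊢; simpa using congrArg (A ↑h * ·) ih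
  have hP : ((List.range a).reverse.map fun j => A (j : ZMod a)).prod = prodSeg A 0 a :=
    hlist (List.range a).reverse
  rw [hP]
  set P : Matrix (Fin N) (Fin N) R := prodSeg A 0 a with hPdef
  set D : Matrix (Fin N) (Fin N) R[X] :=
    Matrix.of fun x y : Fin N => (if x = y then (X : R[X]) ^ a else 0) - C (P x y) with hD
  -- the right hand side equals `D.det`
  have hRHS : P.charpoly.comp (X ^ a) = D.det := by
    rw [Matrix.charpoly,
      show (Matrix.charmatrix P).det.comp (X ^ a)
          = eval₂RingHom Polynomial.C (X ^ a) (Matrix.charmatrix P).det from rfl,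
      RingHom.map_det]
    congr 1
    ext x y
    by_cases h : x = y <;>
      simp [Matrix.charmatrix_apply, Matrix.diagonal_apply, h, hD]
  rw [hRHS]
  -- determinant of the triangularized product
  have h0mem : 0 ∈ Finset.range a := Finset.mem_range.mpr (by omega)
  have hblock0 : ((Matrix.charmatrix (blockCyclic A) * Cmat A).toSquareBlock
      (fun p => p.1.val) 0).det = D.det := by
    rw [det_toSquareBlock _ (by omega : 0 < a)]
    refine congrArg Matrix.det (Matrix.ext fun x y => ?_)
    rw [Matrix.of_apply,
      mul_diag_zero A (p := (((0 : ℕ) : ZMod a), x)) (q := (((0 : ℕ) : ZMod a), y)) rfl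
        (by simp)]
    simp [hD, hPdef]
  have hblockk : ∀ k ∈ (Finset.range a).erase 0,
      ((Matrix.charmatrix (blockCyclic A) * Cmat A).toSquareBlock
        (fun p => p.1.val) k).det = ((X : R[X]) ^ a) ^ N := by
    intro k hk
    have hk0 : k ≠ 0 := Finset.ne_of_mem_erase hk
    have hka : k < a := Finset.mem_range.mp (Finset.mem_of_mem_erase hk)
    rw [det_toSquareBlock _ hka, ← det_ite (((X : R[X]) ^ a))]
    refine congrArg Matrix.det (Matrix.ext fun x y => ?_)
    rw [Matrix.of_apply, Matrix.of_apply,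
      mul_diag_ne_zero A (p := (((k : ℕ) : ZMod a), x)) (q := (((k : ℕ) : ZMod a), y)) rfl
        (by rw [ZMod.val_cast_of_lt hka]; exact hk0)]
  have hdetBC : (Matrix.charmatrix (blockCyclic A) * Cmat A).det
      = D.det * (((X : R[X]) ^ a) ^ N) ^ (a - 1) := by
    rw [(blockTriangular_mul A).det, image_val hNpos,
      ← Finset.mul_prod_erase _ _ h0mem, hblock0]
    congr 1
    rw [Finset.prod_congr rfl hblockk, Finset.prod_const,
      Finset.card_erase_of_mem h0mem, Finset.card_range]
  -- determinant of `Cmat`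
  have hCk : ∀ k ∈ Finset.range a,
      ((Cmat A).transpose.toSquareBlock (fun p => p.1.val) k).det
        = ((X : R[X]) ^ (a - 1)) ^ N := by
    intro k hk
    have hka : k < a := Finset.mem_range.mp hk
    rw [det_toSquareBlock _ hka, ← det_ite (((X : R[X]) ^ (a - 1)))]
    refine congrArg Matrix.det (Matrix.ext fun x y => ?_)
    rw [Matrix.of_apply, Matrix.of_apply, Matrix.transpose_apply,
      Cmat_apply_le A (p := (((k : ℕ) : ZMod a), y)) (q := (((k : ℕ) : ZMod a), x)) le_rfl]
    simp only [Nat.sub_self, Nat.sub_zero, prodSeg_zero, Matrix.one_apply]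
    split
    · next h => rw [h, if_pos rfl, C_1, mul_one]
    · next h => rw [if_neg (fun hc => h hc.symm), C_0, mul_zero]
  have hdetC : (Cmat A).det = (((X : R[X]) ^ (a - 1)) ^ N) ^ a := by
    rw [← Matrix.det_transpose, (blockTriangular_Cmat_transpose A).det, image_val hNpos,
      Finset.prod_congr rfl hCk, Finset.prod_const, Finset.card_range]
  -- put everything together
  have hmul : (Matrix.charmatrix (blockCyclic A)).det * (Cmat A).det
      = (Matrix.charmatrix (blockCyclic A) * Cmat A).det := (Matrix.det_mul _ _).symm
  rw [hdetC, hdetBC] at hmul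
  rw [Matrix.charpoly]
  refine cancel_X_pow ((a - 1) * (N * a)) ?_
  calc (Matrix.charmatrix (blockCyclic A)).det * X ^ ((a - 1) * (N * a))
      = (Matrix.charmatrix (blockCyclic A)).det * (((X : R[X]) ^ (a - 1)) ^ N) ^ a := by
        rw [← pow_mul, ← pow_mul]
    _ = D.det * (((X : R[X]) ^ a) ^ N) ^ (a - 1) := hmul
    _ = D.det * X ^ ((a - 1) * (N * a)) := by
        rw [← pow_mul, ← pow_mul, show a * (N * (a - 1)) = (a - 1) * (N * a) by ring]
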